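/- Let I = {0,1,…,m} be a finite discrete interval, let L_I ⊆ ℝ^{|I|} denote the set of all log-concave sequences indexed by I, let v_1,…,v_d ∈ ℝ^{|I|} and a_1,…,a_d ∈ ℝ, and let A = L_I ∩ P_d(a,v) where P_d(a,v) = {p ∈ [0,∞)^{|I|} : ⟨p, v_i⟩ = a_i for i = 1,…,d}. If p ∈ A has d+1 degrees of freedom, then p is not an extreme point of the convex hull of A. -/

import Mathlib

/-- A sequence `p : {0,…,m} → ℝ` of nonnegative reals is log-concave if its support is a
discrete interval and `p n ^ 2 ≥ p (n+1) * p (n-1)` for all interior indices `n`. -/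
def IsLogConcaveSeq {m : ℕ} (p : Fin (m + 1) → ℝ) : Prop :=
  (∀ n, 0 ≤ p n) ∧
  (∀ i j k : Fin (m + 1), i ≤ j → j ≤ k → 0 < p i → 0 < p k → 0 < p j) ∧
  ∀ n : ℕ, ∀ _h1 : 1 ≤ n, ∀ _h2 : n + 1 ≤ m,
    p ⟨n + 1, by omega⟩ * p ⟨n - 1, by omega⟩ ≤ p ⟨n, by omega⟩ ^ 2

/-- A log-concave sequence `p` has `d` degrees of freedom if there exist linearly independent
sequences `q 1, …, q d`, each supported in the support of `p`, and `ε > 0`, such that for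
all `δ i ∈ (-ε, ε)` the perturbed sequence `p + ∑ i, δ i • q i` is log-concave. -/
def HasDegreesOfFreedom {m : ℕ} (p : Fin (m + 1) → ℝ) (d : ℕ) : Prop :=
  ∃ (q : Fin d → Fin (m + 1) → ℝ) (ε : ℝ), 0 < ε ∧ LinearIndependent ℝ q ∧
    (∀ i n, q i n ≠ 0 → p n ≠ 0) ∧
    ∀ δ : Fin d → ℝ, (∀ i, |δ i| < ε) →
      IsLogConcaveSeq (fun n => p n + ∑ i, δ i * q i n)

/-- The polytope `P_d(a, v) = {p ∈ [0,∞)^{|I|} : ⟨p, v i⟩ = a i, i = 1,…,d}`. -/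
def polytopeP (m d : ℕ) (v : Fin d → Fin (m + 1) → ℝ) (a : Fin d → ℝ) :
    Set (Fin (m + 1) → ℝ) :=
  {p | (∀ n, 0 ≤ p n) ∧ ∀ i, ∑ n, p n * v i n = a i}

/-- If `p ∈ A = L_I ∩ P_d(a, v)` has `d + 1` degrees of freedom, then `p` is
not an extreme point of the convex hull of `A`. -/
theorem dof_not_extreme_point
    {m d : ℕ} (v : Fin d → Fin (m + 1) → ℝ) (a : Fin d → ℝ)
    (p : Fin (m + 1) → ℝ)
    (hp : p ∈ {p | IsLogConcaveSeq p} ∩ polytopeP m d v a)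
    (hdof : HasDegreesOfFreedom p (d + 1)) :
    p ∉ Set.extremePoints ℝ (convexHull ℝ ({p | IsLogConcaveSeq p} ∩ polytopeP m d v a)) := by
  classical
  obtain ⟨q, ε, hε, hli, _hsupp, hlc⟩ := hdof
  set A := {p | IsLogConcaveSeq p} ∩ polytopeP m d v a with hA
  -- The matrix of constraints applied to the directions q i
  set M : Matrix (Fin d) (Fin (d + 1)) ℝ := fun j i => ∑ n, q i n * v j n with hMdef
  -- nontrivial kernel element
  have hker : ∃ c : Fin (d + 1) → ℝ, c ≠ 0 ∧ M.mulVec c = 0 := by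
    have hninj : ¬ Function.Injective M.mulVecLin := by
      intro hinj
      have hle := LinearMap.finrank_le_finrank_of_injective hinj
      simp [Module.finrank_fintype_fun_eq_card] at hle
    rw [← LinearMap.ker_eq_bot] at hninj
    obtain ⟨c, hc, hc0⟩ := Submodule.exists_mem_ne_zero_of_ne_bot hninj
    exact ⟨c, hc0, hc⟩
  obtain ⟨c, hc0, hcM⟩ := hker
  set r : Fin (m + 1) → ℝ := fun n => ∑ i, c i * q i n with hrdef
  have hr0 : r ≠ 0 := by
    intro h
    apply hc0
    have := Fintype.linearIndependent_iff.1 hli c ?_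
    · funext i; exact this i
    · funext n
      have := congrFun h n
      simpa [hrdef, Finset.sum_apply] using this
  -- choose step size t
  set S : ℝ := ∑ i, |c i| with hSdef
  have hS : 0 ≤ S := Finset.sum_nonneg fun i _ => abs_nonneg _
  set t : ℝ := ε / (2 * (1 + S)) with htdef
  have ht : 0 < t := by positivity
  have hbound : ∀ i, |t * c i| < ε := by
    intro i
    have h1 : |c i| ≤ S :=
      Finset.single_le_sum (f := fun i => |c i|) (fun j _ => abs_nonneg _)
        (Finset.mem_univ i)
    have h2 : t * S < ε := by
      rw [htdef, div_mul_eq_mul_div, div_lt_iff₀ (by positivity)]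
      nlinarith
    calc |t * c i| = t * |c i| := by rw [abs_mul, abs_of_pos ht]
      _ ≤ t * S := by nlinarith
      _ < ε := h2
  -- the two perturbed points
  set x : Fin (m + 1) → ℝ := fun n => p n + t * r n with hxdef
  set y : Fin (m + 1) → ℝ := fun n => p n - t * r n with hydef
  have hxlc : IsLogConcaveSeq x := by
    have := hlc (fun i => t * c i) hbound
    convert this using 1
    funext n
    simp only [hxdef, hrdef, Finset.mul_sum]
    congr 1
    exact Finset.sum_congr rfl fun i _ => by ring
  have hylc : IsLogConcaveSeq y := by
    have := hlc (fun i => -(t * c i)) (fun i => by simpa using hbound i)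
    convert this using 1
    funext n
    simp only [hydef, hrdef, Finset.mul_sum]
    rw [sub_eq_add_neg, ← Finset.sum_neg_distrib]
    congr 1
    exact Finset.sum_congr rfl fun i _ => by ring
  -- r is orthogonal to all constraints
  have hrv : ∀ j, ∑ n, r n * v j n = 0 := by
    intro j
    have h0 : M.mulVec c j = 0 := congrFun hcM j
    calc ∑ n, r n * v j n = ∑ n, ∑ i, c i * q i n * v j n := by
          refine Finset.sum_congr rfl fun n _ => ?_
          rw [hrdef]; rw [Finset.sum_mul]
      _ = ∑ i, ∑ n, c i * q i n * v j n := Finset.sum_comm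
      _ = ∑ i, M j i * c i := by
          refine Finset.sum_congr rfl fun i _ => ?_
          rw [hMdef, Finset.sum_mul]
          exact Finset.sum_congr rfl fun n _ => by ring
      _ = 0 := h0
  have hxA : x ∈ A := by
    refine ⟨hxlc, hxlc.1, fun j => ?_⟩
    have hpj := hp.2.2 j
    calc ∑ n, x n * v j n = ∑ n, (p n * v j n + t * (r n * v j n)) := by
          refine Finset.sum_congr rfl fun n _ => ?_
          simp only [hxdef]; ring
      _ = (∑ n, p n * v j n) + t * ∑ n, r n * v j n := by
          rw [Finset.sum_add_distrib, Finset.mul_sum]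
      _ = a j := by rw [hpj, hrv j]; ring
  have hyA : y ∈ A := by
    refine ⟨hylc, hylc.1, fun j => ?_⟩
    have hpj := hp.2.2 j
    calc ∑ n, y n * v j n = ∑ n, (p n * v j n - t * (r n * v j n)) := by
          refine Finset.sum_congr rfl fun n _ => ?_
          simp only [hydef]; ring
      _ = (∑ n, p n * v j n) - t * ∑ n, r n * v j n := by
          rw [Finset.sum_sub_distrib, Finset.mul_sum]
      _ = a j := by rw [hpj, hrv j]; ring
  -- now conclude
  intro hext
  obtain ⟨-, hseg⟩ := hext
  have hxy : p ∈ openSegment ℝ x y := by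
    refine ⟨1/2, 1/2, by norm_num, by norm_num, by norm_num, ?_⟩
    funext n
    simp only [Pi.add_apply, Pi.smul_apply, hxdef, hydef, smul_eq_mul]
    ring
  have hxp : x = p :=
    hseg (subset_convexHull ℝ A hxA) (subset_convexHull ℝ A hyA) hxy
  obtain ⟨n, hn⟩ := Function.ne_iff.1 hr0
  have : p n + t * r n = p n := congrFun hxp n
  have : t * r n = 0 := by linarith
  rcases mul_eq_zero.1 this with h | h
  · exact absurd h (ne_of_gt ht)
  · exact hn h
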